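/- Pure singleton objective (λ = 0), optimal index formula: assume K ≥ 2 and λ = 0. Then κ(0) = 0; κ(η) = 1 for all η ∈ (0, 1/(1 − γ_1)]; and κ(η) = K for all η > 1/(1 − γ_1). (Note 1 − γ_1 > 0 since K ≥ 2 and γ_K > 0.) -/
import Mathlib


open Finset

noncomputable def Gam (γ : ℕ → ℝ) (k : ℕ) : ℝ := ∑ i ∈ Finset.Icc 1 k, γ i

noncomputable def gfun (lam : ℝ) (k : ℕ) : ℝ := (if 1 < k then 1 else 0) + lam * (k : ℝ)

noncomputable def Psi (γ : ℕ → ℝ) (lam η : ℝ) (k : ℕ) : ℝ := gfun lam k - η * Gam γ k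

noncomputable def kappa (γ : ℕ → ℝ) (lam : ℝ) (K : ℕ) (η : ℝ) : ℕ :=
  sInf {k : ℕ | k ≤ K ∧ ∀ j ≤ K, Psi γ lam η k ≤ Psi γ lam η j}

noncomputable def score (γ : ℕ → ℝ) (lam : ℝ) (K : ℕ) (i : ℕ) : ℝ :=
  sInf {η : ℝ | 0 ≤ η ∧ i ≤ kappa γ lam K η}

noncomputable def ell (γ : ℕ → ℝ) (lam η : ℝ) (S : Finset ℕ) : ℝ :=
  (if 1 < S.card then 1 else 0) + lam * (S.card : ℝ) - η * ∑ i ∈ S, γ i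

noncomputable def etaSlope (γ : ℕ → ℝ) (lam : ℝ) (v : ℕ → ℕ) (i : ℕ) : ℝ :=
  (gfun lam (v i) - gfun lam (v (i - 1))) / (Gam γ (v i) - Gam γ (v (i - 1)))

lemma Gam_add (γ : ℕ → ℝ) (a b : ℕ) (hab : a ≤ b) :
    Gam γ b = Gam γ a + ∑ i ∈ Finset.Ioc a b, γ i := by
  unfold Gam
  rw [show Finset.Icc 1 b = Finset.Ioc 0 b from Finset.Icc_add_one_left_eq_Ioc 0 b,
      show Finset.Icc 1 a = Finset.Ioc 0 a from Finset.Icc_add_one_left_eq_Ioc 0 a,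
      ← Finset.sum_Ioc_consecutive _ (Nat.zero_le a) hab]

lemma Gam_lt (γ : ℕ → ℝ) (K : ℕ) (hpos : ∀ i, 1 ≤ i → i ≤ K → 0 < γ i)
    (a b : ℕ) (hab : a < b) (hbK : b ≤ K) : Gam γ a < Gam γ b := by
  rw [Gam_add γ a b hab.le]
  have h : 0 < ∑ i ∈ Finset.Ioc a b, γ i := by
    apply Finset.sum_pos
    · intro i hi
      simp only [Finset.mem_Ioc] at hi
      exact hpos i (by omega) (hi.2.trans hbK)
    · exact ⟨b, by simp [hab]⟩
  linarith

lemma Gam_le (γ : ℕ → ℝ) (K : ℕ) (hpos : ∀ i, 1 ≤ i → i ≤ K → 0 < γ i)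
    (a b : ℕ) (hab : a ≤ b) (hbK : b ≤ K) : Gam γ a ≤ Gam γ b := by
  rcases hab.lt_or_eq with h | h
  · exact (Gam_lt γ K hpos a b h hbK).le
  · rw [h]

/-- Pure singleton objective (λ = 0), optimal index formula: κ(0) = 0, κ(η) = 1 on
(0, 1/(1 − γ₁)], and κ(η) = K for η > 1/(1 − γ₁). -/
theorem stmt14 (K : ℕ) (hK : 2 ≤ K) (γ : ℕ → ℝ) (lam : ℝ) (hlam : lam = 0)
    (hmono : ∀ i j : ℕ, 1 ≤ i → i ≤ j → j ≤ K → γ j ≤ γ i)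
    (hposK : 0 < γ K)
    (hsum : ∑ i ∈ Finset.Icc 1 K, γ i = 1) :
    kappa γ lam K 0 = 0 ∧
    (∀ η : ℝ, 0 < η → η ≤ 1 / (1 - γ 1) → kappa γ lam K η = 1) ∧
    (∀ η : ℝ, 1 / (1 - γ 1) < η → kappa γ lam K η = K) := by
  subst hlam
  have hpos : ∀ i, 1 ≤ i → i ≤ K → 0 < γ i := fun i h1 h2 =>
    lt_of_lt_of_le hposK (hmono i K h1 h2 le_rfl)
  have hG0 : Gam γ 0 = 0 := by simp [Gam]
  have hG1 : Gam γ 1 = γ 1 := by simp [Gam]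
  have hGK : Gam γ K = 1 := hsum
  have hγ1pos : 0 < γ 1 := hpos 1 le_rfl (by omega)
  have hγ1lt : γ 1 < 1 := by
    have := Gam_lt γ K hpos 1 K (by omega) le_rfl
    rw [hG1, hGK] at this; exact this
  have h1γ : 0 < 1 - γ 1 := by linarith
  have hPsi : ∀ η k, Psi γ 0 η k = (if 1 < k then 1 else 0) - η * Gam γ k := by
    intro η k; simp [Psi, gfun]
  refine ⟨?_, ?_, ?_⟩
  · -- η = 0
    apply Nat.sInf_eq_zero.mpr
    left
    refine ⟨Nat.zero_le K, fun j hj => ?_⟩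
    rw [hPsi, hPsi, hG0]
    norm_num
    split_ifs <;> norm_num
  · -- 0 < η ≤ 1/(1-γ1)
    intro η hη1 hη2
    have hη3 : η * (1 - γ 1) ≤ 1 := by
      rw [le_div_iff₀ h1γ] at hη2; linarith
    have h1mem : 1 ∈ {k : ℕ | k ≤ K ∧ ∀ j ≤ K, Psi γ 0 η k ≤ Psi γ 0 η j} := by
      refine ⟨by omega, fun j hj => ?_⟩
      rw [hPsi, hPsi, hG1]
      rcases Nat.lt_or_ge j 2 with hj2 | hj2
      · interval_cases j
        · rw [hG0]; simp; nlinarith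
        · rw [hG1]
      · have hGj : Gam γ j ≤ 1 := by
          have := Gam_le γ K hpos j K hj le_rfl; rw [hGK] at this; exact this
        have h1j : (1:ℕ) < j := hj2
        simp only [h1j, if_pos, if_neg (by omega : ¬ (1:ℕ) < 1)]
        nlinarith
    have h0nmem : (0:ℕ) ∉ {k : ℕ | k ≤ K ∧ ∀ j ≤ K, Psi γ 0 η k ≤ Psi γ 0 η j} := by
      rintro ⟨-, h⟩
      have := h 1 (by omega)
      rw [hPsi, hPsi, hG0, hG1] at this
      simp at this
      nlinarith
    unfold kappa
    have hle : sInf {k : ℕ | k ≤ K ∧ ∀ j ≤ K, Psi γ 0 η k ≤ Psi γ 0 η j} ≤ 1 :=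
      Nat.sInf_le h1mem
    have hmem := Nat.sInf_mem ⟨1, h1mem⟩
    interval_cases h : sInf {k : ℕ | k ≤ K ∧ ∀ j ≤ K, Psi γ 0 η k ≤ Psi γ 0 η j}
    · exact absurd hmem h0nmem
    · rfl
  · -- η > 1/(1-γ1)
    intro η hη
    have hη3 : 1 < η * (1 - γ 1) := by
      rw [div_lt_iff₀ h1γ] at hη; linarith
    have hη1 : 1 < η := by nlinarith
    have hKmem : K ∈ {k : ℕ | k ≤ K ∧ ∀ j ≤ K, Psi γ 0 η k ≤ Psi γ 0 η j} := by
      refine ⟨le_rfl, fun j hj => ?_⟩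
      rw [hPsi, hPsi, hGK]
      simp only [if_pos (by omega : 1 < K)]
      rcases Nat.lt_or_ge j 2 with hj2 | hj2
      · interval_cases j
        · rw [hG0]; simp; linarith
        · rw [hG1]; simp; nlinarith
      · have hGj : Gam γ j ≤ 1 := by
          have := Gam_le γ K hpos j K hj le_rfl; rw [hGK] at this; exact this
        simp only [if_pos (by omega : (1:ℕ) < j)]
        nlinarith
    have hlb : ∀ n ∈ {k : ℕ | k ≤ K ∧ ∀ j ≤ K, Psi γ 0 η k ≤ Psi γ 0 η j}, K ≤ n := by
      rintro n ⟨hnK, hn⟩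
      by_contra hlt
      push_neg at hlt
      have hc := hn K le_rfl
      rw [hPsi, hPsi, hGK] at hc
      simp only [if_pos (by omega : 1 < K)] at hc
      rcases Nat.lt_or_ge n 2 with hn2 | hn2
      · interval_cases n
        · rw [hG0] at hc; simp at hc; linarith
        · rw [hG1] at hc; simp at hc; nlinarith
      · have hGn : Gam γ n < 1 := by
          have := Gam_lt γ K hpos n K hlt le_rfl; rw [hGK] at this; exact this
        simp only [if_pos (by omega : (1:ℕ) < n)] at hc
        nlinarith
    unfold kappa
    exact le_antisymm (Nat.sInf_le hKmem) (hlb _ (Nat.sInf_mem ⟨K, hKmem⟩))
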